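/- For every integer N ≥ 1 and all real parameters Δ > 0, σᵤ > 0, Σ₀ > 0, there exists a unique tuple of real sequences (λₙ, Σₙ, αₙ, βₙ) for n = 1,…,N, with the given initial value Σ₀ and terminal condition α_N = 0, satisfying Kyle's recursion together with the conditions λₙ > 0 and αₙλₙ < 1 for every n = 1,…,N. -/

import Mathlib

/-- Kyle's recursion with `N` trading times, parameters `Δ`, `σu`, `Sig0`:
sequences `(l, S, a, b)` (Kyle's `(λ, Σ, α, β)`), with initial value `S 0 = Sig0`,
terminal condition `a N = 0`, satisfying the four recursion equations together
with `l n > 0` and `a n * l n < 1` for all `n = 1, …, N`. -/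
def KyleSolution (N : ℕ) (Δ σu Sig0 : ℝ) (l S a b : ℕ → ℝ) : Prop :=
  S 0 = Sig0 ∧ a N = 0 ∧
  ∀ n, 1 ≤ n → n ≤ N →
    l n = b n * S (n - 1) / ((b n) ^ 2 * S (n - 1) * Δ + σu ^ 2) ∧
    S n = S (n - 1) * σu ^ 2 / ((b n) ^ 2 * S (n - 1) * Δ + σu ^ 2) ∧
    a (n - 1) = 1 / (4 * l n * (1 - a n * l n)) ∧
    b n = (1 - 2 * a n * l n) / (2 * Δ * l n * (1 - a n * l n)) ∧
    0 < l n ∧ a n * l n < 1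



/-! Auxiliary development for Kyle's recursion. -/

lemma kyle_cubic_exists_unique (x : ℝ) (hx0 : 0 ≤ x) (hx : x < 1/2) :
    ∃! y : ℝ, (0 < y ∧ y < 1/2) ∧ 8*y^2*(1-y)*(1-2*x) = 1-2*y := by
  have hc : 0 < 1 - 2*x := by linarith
  set c := 1 - 2*x with hcdef
  have hcont : ContinuousOn (fun y : ℝ => 8*y^2*(1-y)*c + 2*y - 1) (Set.Icc 0 (1/2)) := by
    fun_prop
  have hiv := intermediate_value_Icc (by norm_num : (0:ℝ) ≤ 1/2) hcont
  have hmem : (0:ℝ) ∈ Set.Icc ((fun y : ℝ => 8*y^2*(1-y)*c + 2*y - 1) 0)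
      ((fun y : ℝ => 8*y^2*(1-y)*c + 2*y - 1) (1/2)) := by
    constructor
    · norm_num
    · show (0:ℝ) ≤ 8*(1/2)^2*(1-1/2)*c + 2*(1/2) - 1
      nlinarith
  obtain ⟨y, hyI, hy⟩ := hiv hmem
  simp only at hy
  refine ⟨y, ⟨⟨⟨?_, ?_⟩, ?_⟩, ?_⟩⟩
  · rcases lt_or_eq_of_le hyI.1 with h | h
    · exact h
    · exfalso; rw [← h] at hy; norm_num at hy
  · rcases lt_or_eq_of_le hyI.2 with h | h
    · exact h
    · exfalso; rw [h] at hy; nlinarith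
  · linarith
  · rintro z ⟨⟨hz0, hz12⟩, hzeq⟩
    have hyeq : 8*y^2*(1-y)*c = 1-2*y := by linarith
    have hfac : (z - y)*(8*c*(z+y-(z^2+z*y+y^2)) + 2) = 0 := by
      linear_combination hzeq - hyeq
    have hbr : 0 ≤ z + y - (z^2+z*y+y^2) := by
      nlinarith [mul_nonneg hz0.le hyI.1,
        mul_nonneg (add_nonneg hz0.le hyI.1) (by linarith [hyI.2] : (0:ℝ) ≤ 1-(z+y))]
    have hpos : 0 < 8*c*(z+y-(z^2+z*y+y^2)) + 2 := by nlinarith [mul_nonneg hc.le hbr]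
    rcases mul_eq_zero.mp hfac with h | h
    · linarith
    · linarith

noncomputable def kylePhi (x : ℝ) : ℝ :=
  if h : 0 ≤ x ∧ x < 1/2 then (kyle_cubic_exists_unique x h.1 h.2).choose else 0

lemma kylePhi_spec {x : ℝ} (hx0 : 0 ≤ x) (hx : x < 1/2) :
    (0 < kylePhi x ∧ kylePhi x < 1/2) ∧
      8*(kylePhi x)^2*(1-kylePhi x)*(1-2*x) = 1-2*kylePhi x := by
  rw [kylePhi, dif_pos (⟨hx0, hx⟩ : 0 ≤ x ∧ x < 1/2)]
  exact (kyle_cubic_exists_unique x hx0 hx).choose_spec.1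

lemma kylePhi_unique {x y : ℝ} (hx0 : 0 ≤ x) (hx : x < 1/2)
    (hy : (0 < y ∧ y < 1/2) ∧ 8*y^2*(1-y)*(1-2*x) = 1-2*y) : y = kylePhi x := by
  rw [kylePhi, dif_pos (⟨hx0, hx⟩ : 0 ≤ x ∧ x < 1/2)]
  exact (kyle_cubic_exists_unique x hx0 hx).choose_spec.2 y hy

noncomputable def kyleY : ℕ → ℝ
  | 0 => 0
  | k+1 => kylePhi (kyleY k)

lemma kyleY_zero : kyleY 0 = 0 := rfl

lemma kyleY_mem : ∀ k, 0 ≤ kyleY k ∧ kyleY k < 1/2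
  | 0 => by norm_num [kyleY]
  | k+1 => by
      have ih := kyleY_mem k
      have := (kylePhi_spec ih.1 ih.2).1
      exact ⟨this.1.le, this.2⟩

lemma kyleY_eq (k : ℕ) :
    8*(kyleY (k+1))^2*(1-kyleY (k+1))*(1-2*kyleY k) = 1-2*kyleY (k+1) := by
  have ih := kyleY_mem k
  exact (kylePhi_spec ih.1 ih.2).2

lemma kyleY_pos (k : ℕ) : 0 < kyleY (k+1) := by
  have ih := kyleY_mem k
  exact (kylePhi_spec ih.1 ih.2).1.1

/-- algebraic step lemma -/
lemma kyle_step_eqs (Δ σu S' Sn L b x : ℝ) (hΔ : 0 < Δ) (hσ : 0 < σu)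
    (hS' : 0 < S') (hx : x < 1/2)
    (hSn : 2*(1-x)*Sn = S') (hL : 0 < L)
    (hL2 : 2*Δ*σu^2*L^2*(1-x) = Sn*(1-2*x)) (hb : b = L*σu^2/Sn) :
    L = b*S'/(b^2*S'*Δ+σu^2) ∧ Sn = S'*σu^2/(b^2*S'*Δ+σu^2) ∧
      b = (1-2*x)/(2*Δ*L*(1-x)) := by
  have hx1 : 0 < 1 - x := by linarith
  have hx2 : 0 < 1 - 2*x := by linarith
  have hSnpos : 0 < Sn := by nlinarith
  have hΔ' := hΔ.ne'
  have hσ' := hσ.ne'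
  have hL' := hL.ne'
  have hx1' := hx1.ne'
  have hx2' := hx2.ne'
  have hSn' : Sn = 2*Δ*σu^2*L^2*(1-x)/(1-2*x) := by
    rw [eq_div_iff hx2']; linarith
  have hS'' : S' = 4*Δ*σu^2*L^2*(1-x)^2/(1-2*x) := by
    rw [← hSn, hSn']; field_simp; ring
  have hb2 : b = (1-2*x)/(2*Δ*L*(1-x)) := by
    rw [hb, hSn']; field_simp
  refine ⟨?_, ?_, hb2⟩
  · rw [hb2, hS'']
    field_simp
    ring
  · rw [hb2, hS'', hSn']
    field_simp
    ring

lemma kyle_sq_alg (Δ σ A B u v : ℝ) (hΔ : 0<Δ) (hσ : 0<σ) (hu : 0<u) (hu2 : u<1/2)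
    (hv0 : 0≤v) (hv2 : v<1/2) (hB : 2*(1-u)*B = A)
    (h8 : 8*u^2*(1-u)*(1-2*v) = 1-2*u) :
    A*(1-2*u)/(4*Δ*σ^2*(1-u)^2) = 16*u^2*(1-v)^2*(B*(1-2*v)/(4*Δ*σ^2*(1-v)^2)) := by
  have hu1 : (0:ℝ) < 1 - u := by linarith
  have hv1 : (0:ℝ) < 1 - v := by linarith
  have h := hΔ.ne'
  have h2 := hσ.ne'
  have h3 := hu1.ne'
  have h4 := hv1.ne'
  rw [← hB]
  rw [mul_div_assoc', div_eq_div_iff (mul_pos (by positivity) (pow_pos hu1 2)).ne' (mul_pos (by positivity) (pow_pos hv1 2)).ne']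
  linear_combination (-(8*B*Δ*σ^2*(1-v)^2*(1-u))) * h8

section Construction

variable (N : ℕ) (Δ σu Sig0 : ℝ)

noncomputable def kyleS : ℕ → ℝ
  | 0 => Sig0
  | n+1 => kyleS n / (2*(1 - kyleY (N - (n+1))))

noncomputable def kyleL (n : ℕ) : ℝ :=
  Real.sqrt (kyleS N Sig0 (n-1) * (1 - 2*kyleY (N-n)) / (4*Δ*σu^2*(1 - kyleY (N-n))^2))

noncomputable def kyleB (n : ℕ) : ℝ := kyleL N Δ σu Sig0 n * σu^2 / kyleS N Sig0 n

noncomputable def kyleA (n : ℕ) : ℝ :=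
  if n = 0 then 1/(4*kyleL N Δ σu Sig0 1*(1 - kyleY (N-1)))
  else kyleY (N-n) / kyleL N Δ σu Sig0 n

variable {Δ σu Sig0}

lemma kyleS_pos (hSig : 0 < Sig0) : ∀ n, 0 < kyleS N Sig0 n
  | 0 => hSig
  | n+1 => by
      have h1 : kyleY (N - (n+1)) < 1/2 := (kyleY_mem _).2
      have := kyleS_pos hSig n
      show 0 < kyleS N Sig0 n / (2*(1 - kyleY (N - (n+1))))
      apply div_pos this; linarith

lemma kyleS_succ (n : ℕ) :
    2*(1 - kyleY (N - (n+1))) * kyleS N Sig0 (n+1) = kyleS N Sig0 n := by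
  have h1 : kyleY (N - (n+1)) < 1/2 := (kyleY_mem _).2
  show 2*(1 - kyleY (N - (n+1))) * (kyleS N Sig0 n / (2*(1 - kyleY (N - (n+1))))) = _
  rw [mul_div_cancel₀]
  have : (0:ℝ) < 2*(1 - kyleY (N - (n+1))) := by linarith
  exact this.ne'

lemma kyleL_sq (hΔ : 0 < Δ) (hσ : 0 < σu) (hSig : 0 < Sig0) (n : ℕ) :
    0 < kyleL N Δ σu Sig0 n ∧
    (kyleL N Δ σu Sig0 n)^2
      = kyleS N Sig0 (n-1) * (1 - 2*kyleY (N-n)) / (4*Δ*σu^2*(1 - kyleY (N-n))^2) := by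
  have h1 : kyleY (N-n) < 1/2 := (kyleY_mem _).2
  have h0 : 0 ≤ kyleY (N-n) := (kyleY_mem _).1
  have hS := kyleS_pos N hSig (n-1)
  have hrad : 0 < kyleS N Sig0 (n-1) * (1 - 2*kyleY (N-n)) / (4*Δ*σu^2*(1 - kyleY (N-n))^2) := by
    apply div_pos
    · apply mul_pos hS; linarith
    · have : (0:ℝ) < 1 - kyleY (N-n) := by linarith
      positivity
  exact ⟨Real.sqrt_pos.mpr hrad, Real.sq_sqrt hrad.le⟩

/-- The main quadratic relation for the constructed `l`. -/
lemma kyleL_rel (hΔ : 0 < Δ) (hσ : 0 < σu) (hSig : 0 < Sig0) {n : ℕ} (hn : 1 ≤ n) :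
    2*Δ*σu^2*(kyleL N Δ σu Sig0 n)^2*(1 - kyleY (N-n))
      = kyleS N Sig0 n * (1 - 2*kyleY (N-n)) := by
  obtain ⟨m, rfl⟩ := Nat.exists_eq_add_of_le hn
  have hm : 1 + m - 1 = m := by omega
  have hsq := (kyleL_sq N hΔ hσ hSig (1+m)).2
  have hS := kyleS_succ (N := N) (Sig0 := Sig0) m
  have hSm := kyleS_pos N hSig m
  have h1 : kyleY (N-(1+m)) < 1/2 := (kyleY_mem _).2
  have h1' : (0:ℝ) < 1 - kyleY (N-(1+m)) := by linarith
  have hmm : m + 1 = 1 + m := by omega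
  rw [hmm] at hS
  rw [hsq, hm]
  rw [← hS]
  have hSn1 : 0 < kyleS N Sig0 (1+m) := kyleS_pos N hSig (1+m)
  field_simp
  ring

/-- ratio relation `l n = 4 x_n l (n+1) (1 - x_{n+1})` for `1 ≤ n < N`. -/
lemma kyleL_ratio (hΔ : 0 < Δ) (hσ : 0 < σu) (hSig : 0 < Sig0) {n : ℕ}
    (hn : 1 ≤ n) (hnN : n < N) :
    kyleL N Δ σu Sig0 n
      = 4*(kyleY (N-n))*(kyleL N Δ σu Sig0 (n+1))*(1 - kyleY (N-(n+1))) := by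
  set k := N - (n+1) with hk
  have hNn : N - n = k + 1 := by omega
  have hu := kyleY_mem (k+1)
  have hv := kyleY_mem k
  have hupos : 0 < kyleY (k+1) := kyleY_pos k
  have h8 := kyleY_eq k
  have hLp := (kyleL_sq N hΔ hσ hSig (n+1)).1
  have hLsq := (kyleL_sq N hΔ hσ hSig (n+1)).2
  have hLsqn := (kyleL_sq N hΔ hσ hSig n).2
  have hnn : n + 1 - 1 = n := by omega
  rw [hnn] at hLsq
  -- S relation : S n = S (n-1) / (2 (1 - x n)) i.e. 2(1-x n) S n = S (n-1)
  obtain ⟨m, rfl⟩ := Nat.exists_eq_add_of_le hn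
  have hm : 1 + m - 1 = m := by omega
  have hS := kyleS_succ (N := N) (Sig0 := Sig0) m
  have hmm : m + 1 = 1 + m := by omega
  rw [hmm] at hS
  have hSm := kyleS_pos N hSig m
  have hS1m := kyleS_pos N hSig (1+m)
  -- positivity of the RHS
  have hrhs : 0 ≤ 4*(kyleY (N-(1+m)))*(kyleL N Δ σu Sig0 (1+m+1))*(1 - kyleY k) := by
    have := (kyleY_mem (N-(1+m))).1
    have h2 : kyleY k < 1/2 := hv.2
    have : (0:ℝ) ≤ 1 - kyleY k := by linarith
    positivity
  -- squares are equal
  have hsqeq : (kyleL N Δ σu Sig0 (1+m))^2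
      = (4*(kyleY (N-(1+m)))*(kyleL N Δ σu Sig0 (1+m+1))*(1 - kyleY k))^2 := by
    have e1 : (4*(kyleY (N-(1+m)))*(kyleL N Δ σu Sig0 (1+m+1))*(1 - kyleY k))^2
        = 16*(kyleY (N-(1+m)))^2*(1 - kyleY k)^2*(kyleL N Δ σu Sig0 (1+m+1))^2 := by ring
    have hNk : N - (1+m+1) = k := by omega
    rw [e1, hLsqn, hLsq, hm, hNk, hNn]
    rw [hNn] at hS
    exact kyle_sq_alg Δ σu (kyleS N Sig0 m) (kyleS N Sig0 (1+m)) _ _ hΔ hσ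
      (kyleY_pos k) hu.2 hv.1 hv.2 hS (kyleY_eq k)
  calc kyleL N Δ σu Sig0 (1+m)
      = Real.sqrt ((kyleL N Δ σu Sig0 (1+m))^2) :=
        (Real.sqrt_sq (kyleL_sq N hΔ hσ hSig (1+m)).1.le).symm
    _ = Real.sqrt ((4*(kyleY (N-(1+m)))*(kyleL N Δ σu Sig0 (1+m+1))*(1 - kyleY k))^2) := by
        rw [hsqeq]
    _ = 4*(kyleY (N-(1+m)))*(kyleL N Δ σu Sig0 (1+m+1))*(1 - kyleY k) := Real.sqrt_sq hrhs

end Construction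

lemma kyle_exists (N : ℕ) (hN : 1 ≤ N) {Δ σu Sig0 : ℝ}
    (hΔ : 0 < Δ) (hσ : 0 < σu) (hSig : 0 < Sig0) :
    KyleSolution N Δ σu Sig0 (kyleL N Δ σu Sig0) (kyleS N Sig0)
      (kyleA N Δ σu Sig0) (kyleB N Δ σu Sig0) := by
  refine ⟨rfl, ?_, ?_⟩
  · unfold kyleA
    rw [if_neg (by omega : ¬ N = 0), Nat.sub_self, kyleY_zero, zero_div]
  intro n h1 hn
  have hL := (kyleL_sq N hΔ hσ hSig n).1
  have hax : kyleA N Δ σu Sig0 n * kyleL N Δ σu Sig0 n = kyleY (N-n) := by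
    unfold kyleA
    rw [if_neg (by omega : ¬ n = 0)]
    exact div_mul_cancel₀ _ hL.ne'
  have hx0 : 0 ≤ kyleY (N-n) := (kyleY_mem _).1
  have hx2 : kyleY (N-n) < 1/2 := (kyleY_mem _).2
  have hSrel : 2*(1 - kyleY (N-n)) * kyleS N Sig0 n = kyleS N Sig0 (n-1) := by
    obtain ⟨m, rfl⟩ := Nat.exists_eq_add_of_le h1
    have := kyleS_succ (N := N) (Sig0 := Sig0) m
    have e : m + 1 = 1 + m := by omega
    have e2 : 1 + m - 1 = m := by omega
    rw [e] at this
    rw [e2]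
    exact this
  obtain ⟨e1, e2, e4⟩ := kyle_step_eqs Δ σu (kyleS N Sig0 (n-1)) (kyleS N Sig0 n)
    (kyleL N Δ σu Sig0 n) (kyleB N Δ σu Sig0 n) (kyleY (N-n)) hΔ hσ
    (kyleS_pos N hSig (n-1)) hx2 hSrel hL (kyleL_rel N hΔ hσ hSig h1) rfl
  refine ⟨e1, e2, ?_, ?_, ?_, ?_⟩
  · -- equation (3)
    rcases Nat.eq_or_lt_of_le h1 with h1' | h1'
    · rw [← h1']
      show kyleA N Δ σu Sig0 0 = _
      unfold kyleA
      rw [if_pos rfl, if_neg (by omega : ¬ (1:ℕ) = 0)]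
      rw [show kyleY (N-1) / kyleL N Δ σu Sig0 1 * kyleL N Δ σu Sig0 1 = kyleY (N-1) from
        div_mul_cancel₀ _ (kyleL_sq N hΔ hσ hSig 1).1.ne']
    · have hn1 : 1 ≤ n - 1 := by omega
      have hn1N : n - 1 < N := by omega
      have hratio := kyleL_ratio N hΔ hσ hSig hn1 hn1N
      have hnn : n - 1 + 1 = n := by omega
      rw [hnn] at hratio
      rw [hax]
      show (if n - 1 = 0 then _ else kyleY (N-(n-1)) / kyleL N Δ σu Sig0 (n-1)) = _
      rw [if_neg (by omega : ¬ n - 1 = 0), hratio]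
      have hy : 0 < kyleY (N-(n-1)) := by
        have : N - (n-1) = (N - n) + 1 := by omega
        rw [this]; exact kyleY_pos _
      have hx1 : (0:ℝ) < 1 - kyleY (N-n) := by linarith
      rw [div_eq_div_iff (by positivity) (by positivity)]
      ring
  · rw [show (2:ℝ) * kyleA N Δ σu Sig0 n * kyleL N Δ σu Sig0 n = 2 * kyleY (N-n) from by
      rw [mul_assoc, hax], hax]
    exact e4
  · exact hL
  · rw [hax]; linarith

lemma kyle_facts (N : ℕ) (hN : 1 ≤ N) {Δ σu Sig0 : ℝ} {l S a b : ℕ → ℝ}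
    (hΔ : 0 < Δ) (hσ : 0 < σu) (hSig : 0 < Sig0)
    (h : KyleSolution N Δ σu Sig0 l S a b) :
    (∀ n, n ≤ N → 0 < S n) ∧
    (∀ n, 1 ≤ n → n ≤ N →
      2*(1 - a n * l n) * S n = S (n-1) ∧
      2*Δ*σu^2*(l n)^2*(1 - a n * l n) = S n * (1 - 2*(a n * l n)) ∧
      b n = l n * σu^2 / S n ∧ a n * l n < 1/2) ∧
    (∀ n, 1 ≤ n → n ≤ N → a n * l n = kyleY (N - n)) := by
  obtain ⟨hS0, haN, heq⟩ := h
  have hSpos : ∀ n, n ≤ N → 0 < S n := by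
    intro n
    induction n with
    | zero => intro _; rw [hS0]; exact hSig
    | succ m ih =>
      intro hm
      have hSm := ih (by omega)
      obtain ⟨_, e2, _, _, _, _⟩ := heq (m+1) (by omega) hm
      have hmm : m + 1 - 1 = m := by omega
      rw [hmm] at e2
      rw [e2]
      have hD : 0 < b (m+1)^2 * S m * Δ + σu^2 := by positivity
      positivity
  have hstep : ∀ n, 1 ≤ n → n ≤ N →
      2*(1 - a n * l n) * S n = S (n-1) ∧
      2*Δ*σu^2*(l n)^2*(1 - a n * l n) = S n * (1 - 2*(a n * l n)) ∧
      b n = l n * σu^2 / S n ∧ a n * l n < 1/2 := by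
    intro n h1 hn
    obtain ⟨e1, e2, e3, e4, hL, hx1⟩ := heq n h1 hn
    have hS' := hSpos (n-1) (by omega)
    have hSn := hSpos n hn
    have hD : 0 < b n^2 * S (n-1) * Δ + σu^2 := by positivity
    have h1' : l n * (b n^2 * S (n-1) * Δ + σu^2) = b n * S (n-1) := by
      rw [e1, div_mul_cancel₀ _ hD.ne']
    have h2' : S n * (b n^2 * S (n-1) * Δ + σu^2) = S (n-1) * σu^2 := by
      rw [e2, div_mul_cancel₀ _ hD.ne']
    have hbpos : 0 < b n := by nlinarith [mul_pos hL hD]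
    have hden : 0 < 2*Δ*l n*(1 - a n * l n) := by
      have : (0:ℝ) < 1 - a n * l n := by linarith
      positivity
    have h4' : b n * (2*Δ*l n*(1 - a n * l n)) = 1 - 2*(a n * l n) := by
      rw [e4, div_mul_cancel₀]
      · ring_nf
      · exact hden.ne'
    have hxlt : a n * l n < 1/2 := by nlinarith [mul_pos hbpos hden]
    have hbS : b n * S n = l n * σu^2 := by
      apply mul_right_cancel₀ hD.ne'
      linear_combination (b n) * h2' - σu^2 * h1'
    have hL2 : 2*Δ*σu^2*(l n)^2*(1 - a n * l n) = S n * (1 - 2*(a n * l n)) := by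
      linear_combination (-(2*Δ*l n*(1 - a n * l n))) * hbS + S n * h4'
    have hSrel : 2*(1 - a n * l n) * S n = S (n-1) := by
      apply mul_right_cancel₀ (mul_pos (by positivity : (0:ℝ) < σu^2) hSn).ne'
      linear_combination (2*(1 - a n * l n)*S n) * h2'
        + (-(2*(1 - a n * l n)*Δ*S (n-1)*(b n*S n + l n*σu^2))) * hbS
        + (-(σu^2*S (n-1))) * hL2
    refine ⟨hSrel, hL2, ?_, hxlt⟩
    rw [eq_div_iff hSn.ne']
    exact hbS
  refine ⟨hSpos, hstep, ?_⟩
  have hback : ∀ k n, 1 ≤ n → n + k = N → a n * l n = kyleY k := by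
    intro k
    induction k with
    | zero =>
      intro n h1 hnk
      have : n = N := by omega
      rw [this, haN, zero_mul, kyleY_zero]
    | succ m ih =>
      intro n h1 hnk
      have hnN : n ≤ N := by omega
      have ihn := ih (n+1) (by omega) (by omega)
      obtain ⟨_, _, e3, _, hL', hx1'⟩ := heq (n+1) (by omega) (by omega)
      obtain ⟨_, _, _, _, hL, _⟩ := heq n h1 hnN
      obtain ⟨hSrel', hL2', _, hxlt'⟩ := hstep (n+1) (by omega) (by omega)
      obtain ⟨hSrel, hL2, _, hxlt⟩ := hstep n h1 hnN
      have hss : n + 1 - 1 = n := by omega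
      rw [hss] at e3
      have hx1p : (0:ℝ) < 1 - a (n+1) * l (n+1) := by linarith
      have hapos : 0 < a n := by
        rw [e3]
        positivity
      have hxpos : 0 < a n * l n := mul_pos hapos hL
      have hlr : l n = 4*(a n * l n)*l (n+1)*(1 - a (n+1) * l (n+1)) := by
        rw [e3]
        have hD : (4 * l (n+1) * (1 - a (n+1) * l (n+1))) ≠ 0 :=
          mul_ne_zero (mul_pos (by norm_num) hL').ne' hx1p.ne'
        rw [eq_comm, show 4*(1/(4*l (n+1)*(1-a (n+1)*l (n+1))) * l n)*l (n+1)*(1-a (n+1)*l (n+1)) = l n * ((4*l (n+1)*(1-a (n+1)*l (n+1))) / (4*l (n+1)*(1-a (n+1)*l (n+1)))) by ring, div_self hD, mul_one]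
      have hSnn := hSpos (n+1) (by omega)
      have hkey : (8*(a n * l n)^2*(1 - a n * l n)*(1 - 2*(a (n+1) * l (n+1))))
            * (2*(1 - a (n+1) * l (n+1))*S (n+1))
          = (1 - 2*(a n * l n)) * (2*(1 - a (n+1) * l (n+1))*S (n+1)) := by
        have hSrel'' : 2*(1 - a (n+1) * l (n+1))*S (n+1) = S n := by
          have := hSrel'
          rw [hss] at this
          exact this
        linear_combination hL2
          + (-(2*Δ*σu^2*(1 - a n * l n))*(l n + 4*(a n * l n)*l (n+1)*(1 - a (n+1) * l (n+1)))) * hlr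
          + (-(1 - 2*(a n * l n))) * hSrel''
          + (-(16*(a n * l n)^2*(1 - a n * l n)*(1 - a (n+1) * l (n+1)))) * hL2'
      have hcub : 8*(a n * l n)^2*(1 - a n * l n)*(1 - 2*(a (n+1) * l (n+1)))
          = 1 - 2*(a n * l n) := by
        have hpos : (0:ℝ) < 2*(1 - a (n+1) * l (n+1))*S (n+1) := by positivity
        exact mul_right_cancel₀ hpos.ne' hkey
      rw [ihn] at hcub
      have := kylePhi_unique (kyleY_mem m).1 (kyleY_mem m).2
        ⟨⟨hxpos, hxlt⟩, by linarith [hcub]⟩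
      rw [this]
      rfl
  intro n h1 hn
  exact hback (N - n) n h1 (by omega)

theorem kyle_main (N : ℕ) (hN : 1 ≤ N) (Δ σu Sig0 : ℝ)
    (hΔ : 0 < Δ) (hσ : 0 < σu) (hSig : 0 < Sig0) :
    (∃ l S a b : ℕ → ℝ, KyleSolution N Δ σu Sig0 l S a b) ∧
    (∀ l S a b l' S' a' b' : ℕ → ℝ,
      KyleSolution N Δ σu Sig0 l S a b → KyleSolution N Δ σu Sig0 l' S' a' b' →
      (∀ n, n ≤ N → S n = S' n ∧ a n = a' n) ∧
      (∀ n, 1 ≤ n → n ≤ N → l n = l' n ∧ b n = b' n)) := by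
  constructor
  · exact ⟨_, _, _, _, kyle_exists N hN hΔ hσ hSig⟩
  · intro l S a b l' S' a' b' h h'
    obtain ⟨hSpos, hstep, hx⟩ := kyle_facts N hN hΔ hσ hSig h
    obtain ⟨hSpos', hstep', hx'⟩ := kyle_facts N hN hΔ hσ hSig h'
    have hSeq : ∀ n, n ≤ N → S n = S' n := by
      intro n
      induction n with
      | zero => intro _; rw [h.1, h'.1]
      | succ m ih =>
        intro hm
        have hSm := ih (by omega)
        have r1 := (hstep (m+1) (by omega) hm).1
        have r2 := (hstep' (m+1) (by omega) hm).1
        rw [hx (m+1) (by omega) hm] at r1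
        rw [hx' (m+1) (by omega) hm] at r2
        have hmm : m + 1 - 1 = m := by omega
        rw [hmm] at r1 r2
        have hy : kyleY (N-(m+1)) < 1/2 := (kyleY_mem _).2
        have hpos : (0:ℝ) < 2*(1 - kyleY (N-(m+1))) := by linarith
        apply mul_left_cancel₀ hpos.ne'
        rw [r1, r2, hSm]
    have hleq : ∀ n, 1 ≤ n → n ≤ N → l n = l' n := by
      intro n h1 hn
      have r1 := (hstep n h1 hn).2.1
      have r2 := (hstep' n h1 hn).2.1
      rw [hx n h1 hn] at r1
      rw [hx' n h1 hn] at r2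
      rw [← hSeq n hn] at r2
      have hsq : (l n)^2 = (l' n)^2 := by
        have hy : kyleY (N-n) < 1/2 := (kyleY_mem _).2
        have hy1 : (0:ℝ) < 1 - kyleY (N-n) := by linarith
        have hpos : (0:ℝ) < 2*Δ*σu^2*(1 - kyleY (N-n)) := by positivity
        apply mul_left_cancel₀ hpos.ne'
        linear_combination r1 - r2
      have hL : 0 < l n := (h.2.2 n h1 hn).2.2.2.2.1
      have hL' : 0 < l' n := (h'.2.2 n h1 hn).2.2.2.2.1
      have hfac : (l n - l' n)*(l n + l' n) = 0 := by linear_combination hsq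
      rcases mul_eq_zero.mp hfac with hc | hc
      · linarith
      · linarith
    have hbeq : ∀ n, 1 ≤ n → n ≤ N → b n = b' n := by
      intro n h1 hn
      rw [(hstep n h1 hn).2.2.1, (hstep' n h1 hn).2.2.1, hleq n h1 hn, hSeq n hn]
    have haeq : ∀ n, n ≤ N → a n = a' n := by
      intro n hn
      rcases Nat.eq_or_lt_of_le hn with h' | hlt
      · rw [h'] at *
        rw [h.2.1, ‹KyleSolution N Δ σu Sig0 l' S' a' b'›.2.1]
      · have e3 := (h.2.2 (n+1) (by omega) (by omega)).2.2.1
        have e3' := (‹KyleSolution N Δ σu Sig0 l' S' a' b'›.2.2 (n+1) (by omega) (by omega)).2.2.1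
        have hss : n + 1 - 1 = n := by omega
        rw [hss] at e3 e3'
        rw [e3, e3', hx (n+1) (by omega) (by omega), hx' (n+1) (by omega) (by omega),
          hleq (n+1) (by omega) (by omega)]
    exact ⟨fun n hn => ⟨hSeq n hn, haeq n hn⟩, fun n h1 hn => ⟨hleq n h1 hn, hbeq n h1 hn⟩⟩


/-- For every `N ≥ 1` and all parameters `Δ > 0`, `σu > 0`, `Sig0 > 0` there is a unique
solution of Kyle's recursion satisfying `λₙ > 0` and `αₙ λₙ < 1` for `n = 1, …, N`
(uniqueness of the values `λₙ, βₙ` for `n = 1, …, N` and `Σₙ, αₙ` for `n = 0, …, N`). -/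
theorem kyle_recursion_exists_unique (N : ℕ) (hN : 1 ≤ N) (Δ σu Sig0 : ℝ)
    (hΔ : 0 < Δ) (hσ : 0 < σu) (hSig : 0 < Sig0) :
    (∃ l S a b : ℕ → ℝ, KyleSolution N Δ σu Sig0 l S a b) ∧
    (∀ l S a b l' S' a' b' : ℕ → ℝ,
      KyleSolution N Δ σu Sig0 l S a b → KyleSolution N Δ σu Sig0 l' S' a' b' →
      (∀ n, n ≤ N → S n = S' n ∧ a n = a' n) ∧
      (∀ n, 1 ≤ n → n ≤ N → l n = l' n ∧ b n = b' n)) := by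
  exact kyle_main N hN Δ σu Sig0 hΔ hσ hSig
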